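/- If σ: H ⊗ H → k is a 2-cocycle on a Hopf algebra H (convolution invertible, satisfying σ(x₁,y₁)σ(x₂y₂,z) = σ(y₁,z₁)σ(x,y₂z₂) and σ(x,1)=ε(x)=σ(1,x)), then the twisted multiplication [x][y] = σ(x₁,y₁) σ⁻¹(x₃,y₃) [x₂y₂] on the underlying coalgebra of H is associative. -/

import Mathlib

open scoped TensorProduct

noncomputable section FrozenDefs

variable (k : Type*) [CommRing k] (H : Type*) [Ring H] [HopfAlgebra k H]

/-- The comultiplication of the tensor product coalgebra `H ⊗ H`:
`Δ₂(x ⊗ y) = (x₁ ⊗ y₁) ⊗ (x₂ ⊗ y₂)` in Sweedler notation. -/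
def comul2 : H ⊗[k] H →ₗ[k] (H ⊗[k] H) ⊗[k] (H ⊗[k] H) :=
  (TensorProduct.tensorTensorTensorComm k H H H H).toLinearMap ∘ₗ
    TensorProduct.map Coalgebra.comul Coalgebra.comul

/-- The counit of the tensor product coalgebra `H ⊗ H`: `ε₂(x ⊗ y) = ε(x)ε(y)`. -/
def counit2 : H ⊗[k] H →ₗ[k] k :=
  LinearMap.mul' k k ∘ₗ TensorProduct.map Coalgebra.counit Coalgebra.counit

/-- Convolution product of two linear functionals on the coalgebra `H ⊗ H`. -/
def conv2 (f g : H ⊗[k] H →ₗ[k] k) : H ⊗[k] H →ₗ[k] k :=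
  LinearMap.mul' k k ∘ₗ TensorProduct.map f g ∘ₗ comul2 k H

/-- The comultiplication of the tensor product coalgebra `(H ⊗ H) ⊗ H`. -/
def comul3 : (H ⊗[k] H) ⊗[k] H →ₗ[k] ((H ⊗[k] H) ⊗[k] H) ⊗[k] ((H ⊗[k] H) ⊗[k] H) :=
  (TensorProduct.tensorTensorTensorComm k (H ⊗[k] H) (H ⊗[k] H) H H).toLinearMap ∘ₗ
    TensorProduct.map (comul2 k H) Coalgebra.comul

/-- Convolution product of two linear functionals on the coalgebra `(H ⊗ H) ⊗ H`. -/
def conv3 (f g : (H ⊗[k] H) ⊗[k] H →ₗ[k] k) : (H ⊗[k] H) ⊗[k] H →ₗ[k] k :=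
  LinearMap.mul' k k ∘ₗ TensorProduct.map f g ∘ₗ comul3 k H

variable {k H} in
/-- The cocycle-twisted multiplication on `H`:
`[x][y] = σ(x₁, y₁) σ⁻¹(x₃, y₃) [x₂ y₂]` in Sweedler notation. -/
def twistedMul (σ σinv : H ⊗[k] H →ₗ[k] k) : H ⊗[k] H →ₗ[k] H :=
  (TensorProduct.lid k H).toLinearMap ∘ₗ
    TensorProduct.map σ
      ((TensorProduct.rid k H).toLinearMap ∘ₗ
        TensorProduct.map (LinearMap.mul' k H) σinv) ∘ₗ
    TensorProduct.map LinearMap.id (comul2 k H) ∘ₗ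
    comul2 k H

end FrozenDefs

noncomputable section InfraNS
open TensorProduct LinearMap
variable {k : Type*} [CommRing k]

section
variable {A B C V W : Type*} [AddCommGroup A] [Module k A] [AddCommGroup B] [Module k B]
  [AddCommGroup C] [Module k C] [AddCommGroup V] [Module k V] [AddCommGroup W] [Module k W]

structure CoalgData (k : Type*) [CommRing k] (C : Type*) [AddCommGroup C] [Module k C] where
  dl : C →ₗ[k] C ⊗[k] C
  cu : C →ₗ[k] k
  coassoc : (TensorProduct.assoc k C C C).toLinearMap ∘ₗ dl.rTensor C ∘ₗ dl = dl.lTensor C ∘ₗ dl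
  rCounit : cu.rTensor C ∘ₗ dl = TensorProduct.mk k k C 1
  lCounit : cu.lTensor C ∘ₗ dl = (TensorProduct.mk k C k).flip 1

variable (f : A →ₗ[k] A ⊗[k] A) (g : B →ₗ[k] B ⊗[k] B) (cA : A →ₗ[k] k) (cB : B →ₗ[k] k)

private lemma prod_keyL :
    (((tensorTensorTensorComm k A A B B).toLinearMap ∘ₗ map f g).rTensor (A ⊗[k] B)) ∘ₗ
      (tensorTensorTensorComm k A A B B).toLinearMap
    = map (tensorTensorTensorComm k A A B B).toLinearMap LinearMap.id ∘ₗ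
        (tensorTensorTensorComm k (A ⊗[k] A) A (B ⊗[k] B) B).toLinearMap ∘ₗ
        map (f.rTensor A) (g.rTensor B) := by
  ext
  simp

private lemma prod_keyR :
    (((tensorTensorTensorComm k A A B B).toLinearMap ∘ₗ map f g).lTensor (A ⊗[k] B)) ∘ₗ
      (tensorTensorTensorComm k A A B B).toLinearMap
    = map LinearMap.id (tensorTensorTensorComm k A A B B).toLinearMap ∘ₗ
        (tensorTensorTensorComm k A (A ⊗[k] A) B (B ⊗[k] B)).toLinearMap ∘ₗ
        map (f.lTensor A) (g.lTensor B) := by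
  ext
  simp

private lemma prod_shuffle :
    (TensorProduct.assoc k (A ⊗[k] B) (A ⊗[k] B) (A ⊗[k] B)).toLinearMap ∘ₗ
      map (tensorTensorTensorComm k A A B B).toLinearMap LinearMap.id ∘ₗ
      (tensorTensorTensorComm k (A ⊗[k] A) A (B ⊗[k] B) B).toLinearMap
    = map LinearMap.id (tensorTensorTensorComm k A A B B).toLinearMap ∘ₗ
        (tensorTensorTensorComm k A (A ⊗[k] A) B (B ⊗[k] B)).toLinearMap ∘ₗ
        map (TensorProduct.assoc k A A A).toLinearMap (TensorProduct.assoc k B B B).toLinearMap := by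
  ext
  simp

private lemma prod_keyCr :
    ((mul' k k ∘ₗ map cA cB).rTensor (A ⊗[k] B)) ∘ₗ (tensorTensorTensorComm k A A B B).toLinearMap
    = map (mul' k k) LinearMap.id ∘ₗ (tensorTensorTensorComm k k A k B).toLinearMap ∘ₗ
        map (cA.rTensor A) (cB.rTensor B) := by
  ext
  simp

private lemma prod_keyCl :
    ((mul' k k ∘ₗ map cA cB).lTensor (A ⊗[k] B)) ∘ₗ (tensorTensorTensorComm k A A B B).toLinearMap
    = map LinearMap.id (mul' k k) ∘ₗ (tensorTensorTensorComm k A k B k).toLinearMap ∘ₗ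
        map (cA.lTensor A) (cB.lTensor B) := by
  ext
  simp

private lemma prod_shuffleCr :
    map (mul' k k) LinearMap.id ∘ₗ (tensorTensorTensorComm k k A k B).toLinearMap ∘ₗ
      map (TensorProduct.mk k k A 1) (TensorProduct.mk k k B 1)
    = TensorProduct.mk k k (A ⊗[k] B) 1 := by
  ext
  simp

private lemma prod_shuffleCl :
    map LinearMap.id (mul' k k) ∘ₗ (tensorTensorTensorComm k A k B k).toLinearMap ∘ₗ
      map ((TensorProduct.mk k A k).flip 1) ((TensorProduct.mk k B k).flip 1)
    = (TensorProduct.mk k (A ⊗[k] B) k).flip 1 := by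
  ext
  simp

/-- tensor product of coalgebra data -/
def CoalgData.prod (dA : CoalgData k A) (dB : CoalgData k B) : CoalgData k (A ⊗[k] B) where
  dl := (tensorTensorTensorComm k A A B B).toLinearMap ∘ₗ map dA.dl dB.dl
  cu := mul' k k ∘ₗ map dA.cu dB.cu
  coassoc := by
    refine TensorProduct.ext' fun x y => ?_
    have e1 := LinearMap.congr_fun (prod_keyL dA.dl dB.dl) (dA.dl x ⊗ₜ dB.dl y)
    have e2 := LinearMap.congr_fun (prod_keyR dA.dl dB.dl) (dA.dl x ⊗ₜ dB.dl y)
    have e3 := LinearMap.congr_fun (prod_shuffle (k := k) (A := A) (B := B))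
      ((dA.dl.rTensor A (dA.dl x)) ⊗ₜ (dB.dl.rTensor B (dB.dl y)))
    have cA := LinearMap.congr_fun dA.coassoc x
    have cB := LinearMap.congr_fun dB.coassoc y
    simp only [LinearMap.comp_apply, TensorProduct.map_tmul, LinearMap.id_coe, id_eq] at e1 e2 e3 cA cB ⊢
    rw [e1, e3, cA, cB, ← e2]
  rCounit := by
    refine TensorProduct.ext' fun x y => ?_
    have e1 := LinearMap.congr_fun (prod_keyCr dA.cu dB.cu) (dA.dl x ⊗ₜ dB.dl y)
    have e2 := LinearMap.congr_fun (prod_shuffleCr (k := k) (A := A) (B := B)) (x ⊗ₜ y)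
    have cA := LinearMap.congr_fun dA.rCounit x
    have cB := LinearMap.congr_fun dB.rCounit y
    simp only [LinearMap.comp_apply, TensorProduct.map_tmul, LinearMap.id_coe, id_eq] at e1 e2 cA cB ⊢
    rw [e1, cA, cB, ← e2]
  lCounit := by
    refine TensorProduct.ext' fun x y => ?_
    have e1 := LinearMap.congr_fun (prod_keyCl dA.cu dB.cu) (dA.dl x ⊗ₜ dB.dl y)
    have e2 := LinearMap.congr_fun (prod_shuffleCl (k := k) (A := A) (B := B)) (x ⊗ₜ y)
    have cA := LinearMap.congr_fun dA.lCounit x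
    have cB := LinearMap.congr_fun dB.lCounit y
    simp only [LinearMap.comp_apply, TensorProduct.map_tmul, LinearMap.id_coe, id_eq] at e1 e2 cA cB ⊢
    rw [e1, cA, cB, ← e2]


/-- coalgebra morphism property -/
def IsCoalgHom (dA : CoalgData k A) (dB : CoalgData k B) (φ : A →ₗ[k] B) : Prop :=
  dB.dl ∘ₗ φ = map φ φ ∘ₗ dA.dl ∧ dB.cu ∘ₗ φ = dA.cu

lemma IsCoalgHom.comp {dA : CoalgData k A} {dB : CoalgData k B} {dC : CoalgData k C}
    {φ : A →ₗ[k] B} {ψ : B →ₗ[k] C} (hψ : IsCoalgHom dB dC ψ) (hφ : IsCoalgHom dA dB φ) :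
    IsCoalgHom dA dC (ψ ∘ₗ φ) := by
  constructor
  · rw [← LinearMap.comp_assoc, hψ.1, LinearMap.comp_assoc, hφ.1, ← LinearMap.comp_assoc,
      ← map_comp]
  · rw [← LinearMap.comp_assoc, hψ.2, hφ.2]

/-- εε-collapse -/
lemma cu_collapse (d : CoalgData k C) : mul' k k ∘ₗ map d.cu d.cu ∘ₗ d.dl = d.cu := by
  refine LinearMap.ext fun c => ?_
  have h := LinearMap.congr_fun d.rCounit c
  simp only [LinearMap.comp_apply] at h ⊢
  rw [← lTensor_comp_rTensor, LinearMap.comp_apply, h]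
  simp


/-- left scalar star -/
def sL (d : CoalgData k C) (p : C →ₗ[k] k) (X : C →ₗ[k] V) : C →ₗ[k] V :=
  (TensorProduct.lid k V).toLinearMap ∘ₗ map p X ∘ₗ d.dl

/-- right scalar star -/
def sR (d : CoalgData k C) (X : C →ₗ[k] V) (q : C →ₗ[k] k) : C →ₗ[k] V :=
  (TensorProduct.rid k V).toLinearMap ∘ₗ map X q ∘ₗ d.dl

lemma sL_comp_hom {dA : CoalgData k A} {dC : CoalgData k C} {φ : A →ₗ[k] C}
    (hφ : IsCoalgHom dA dC φ) (p : C →ₗ[k] k) (X : C →ₗ[k] V) :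
    sL dC p X ∘ₗ φ = sL dA (p ∘ₗ φ) (X ∘ₗ φ) := by
  rw [sL, sL, map_comp]
  simp only [LinearMap.comp_assoc, ← hφ.1]

lemma sR_comp_hom {dA : CoalgData k A} {dC : CoalgData k C} {φ : A →ₗ[k] C}
    (hφ : IsCoalgHom dA dC φ) (X : C →ₗ[k] V) (q : C →ₗ[k] k) :
    sR dC X q ∘ₗ φ = sR dA (X ∘ₗ φ) (q ∘ₗ φ) := by
  rw [sR, sR, map_comp]
  simp only [LinearMap.comp_assoc, ← hφ.1]

lemma sL_counit (d : CoalgData k C) (X : C →ₗ[k] V) : sL d d.cu X = X := by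
  refine LinearMap.ext fun c => ?_
  have h := LinearMap.congr_fun d.rCounit c
  simp only [LinearMap.comp_apply] at h
  simp only [sL, LinearMap.comp_apply, ← lTensor_comp_rTensor, h]
  simp

lemma sR_counit (d : CoalgData k C) (X : C →ₗ[k] V) : sR d X d.cu = X := by
  refine LinearMap.ext fun c => ?_
  have h := LinearMap.congr_fun d.lCounit c
  simp only [LinearMap.comp_apply] at h
  simp only [sR, LinearMap.comp_apply, ← rTensor_comp_lTensor, h]
  simp


end

section
variable {A A' B B' C V W : Type*}
  [AddCommGroup A] [Module k A] [AddCommGroup B] [Module k B]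
  [AddCommGroup A'] [Module k A'] [AddCommGroup B'] [Module k B']
  [AddCommGroup C] [Module k C] [AddCommGroup V] [Module k V] [AddCommGroup W] [Module k W]

lemma ttc_nat {M N P Q M₁ N₁ P₁ Q₁ : Type*}
    [AddCommGroup M] [Module k M] [AddCommGroup N] [Module k N]
    [AddCommGroup P] [Module k P] [AddCommGroup Q] [Module k Q]
    [AddCommGroup M₁] [Module k M₁] [AddCommGroup N₁] [Module k N₁]
    [AddCommGroup P₁] [Module k P₁] [AddCommGroup Q₁] [Module k Q₁]
    (f : M →ₗ[k] M₁) (g : N →ₗ[k] N₁) (h : P →ₗ[k] P₁) (l : Q →ₗ[k] Q₁) :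
    (tensorTensorTensorComm k M₁ N₁ P₁ Q₁).toLinearMap ∘ₗ map (map f g) (map h l)
      = map (map f h) (map g l) ∘ₗ (tensorTensorTensorComm k M N P Q).toLinearMap := by
  ext
  simp

lemma prod_hom {dA : CoalgData k A} {dA' : CoalgData k A'} {dB : CoalgData k B}
    {dB' : CoalgData k B'} {φ : A →ₗ[k] A'} {ψ : B →ₗ[k] B'}
    (hφ : IsCoalgHom dA dA' φ) (hψ : IsCoalgHom dB dB' ψ) :
    IsCoalgHom (dA.prod dB) (dA'.prod dB') (map φ ψ) := by
  constructor
  · refine TensorProduct.ext' fun x y => ?_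
    have e1 := LinearMap.congr_fun hφ.1 x
    have e2 := LinearMap.congr_fun hψ.1 y
    have e3 := LinearMap.congr_fun (ttc_nat (k := k) φ φ ψ ψ) (dA.dl x ⊗ₜ dB.dl y)
    simp only [CoalgData.prod, LinearMap.comp_apply, map_tmul] at e1 e2 e3 ⊢
    rw [e1, e2, ← e3]
  · refine TensorProduct.ext' fun x y => ?_
    have e1 := LinearMap.congr_fun hφ.2 x
    have e2 := LinearMap.congr_fun hψ.2 y
    simp only [CoalgData.prod, LinearMap.comp_apply, map_tmul] at e1 e2 ⊢
    rw [e1, e2]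

private lemma assoc_shuffle :
    (tensorTensorTensorComm k A A (B ⊗[k] C) (B ⊗[k] C)).toLinearMap ∘ₗ
      map LinearMap.id (tensorTensorTensorComm k B B C C).toLinearMap ∘ₗ
      (TensorProduct.assoc k (A ⊗[k] A) (B ⊗[k] B) (C ⊗[k] C)).toLinearMap
    = map (TensorProduct.assoc k A B C).toLinearMap (TensorProduct.assoc k A B C).toLinearMap ∘ₗ
        (tensorTensorTensorComm k (A ⊗[k] B) (A ⊗[k] B) C C).toLinearMap ∘ₗ
        map (tensorTensorTensorComm k A A B B).toLinearMap LinearMap.id := by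
  ext
  simp

lemma assoc_hom (dA : CoalgData k A) (dB : CoalgData k B) (dC : CoalgData k C) :
    IsCoalgHom ((dA.prod dB).prod dC) (dA.prod (dB.prod dC))
      (TensorProduct.assoc k A B C).toLinearMap := by
  constructor
  · ext x y z
    have e := LinearMap.congr_fun (assoc_shuffle (k := k) (A := A) (B := B) (C := C))
      ((dA.dl x ⊗ₜ dB.dl y) ⊗ₜ dC.dl z)
    simp only [CoalgData.prod, AlgebraTensorModule.curry_apply, curry_apply,
      LinearMap.coe_restrictScalars, LinearMap.comp_apply, map_tmul, assoc_tmul,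
      LinearMap.id_coe, id_eq] at e ⊢
    rw [← e]
    simp
  · ext x y z
    simp [CoalgData.prod, mul_assoc]

/-- projection to the first factor -/
def cproj₁ (dB : CoalgData k B) : A ⊗[k] B →ₗ[k] A :=
  (TensorProduct.rid k A).toLinearMap ∘ₗ dB.cu.lTensor A

/-- projection to the second factor -/
def cproj₂ (dA : CoalgData k A) : A ⊗[k] B →ₗ[k] B :=
  (TensorProduct.lid k B).toLinearMap ∘ₗ dA.cu.rTensor B

private lemma piKey (cB : B →ₗ[k] k) :
    map ((TensorProduct.rid k A).toLinearMap ∘ₗ cB.lTensor A)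
        ((TensorProduct.rid k A).toLinearMap ∘ₗ cB.lTensor A) ∘ₗ
      (tensorTensorTensorComm k A A B B).toLinearMap
    = (TensorProduct.rid k (A ⊗[k] A)).toLinearMap ∘ₗ
        (mul' k k ∘ₗ map cB cB).lTensor (A ⊗[k] A) := by
  ext a₁ b₁ a₂ b₂
  simp [TensorProduct.smul_tmul', TensorProduct.tmul_smul, smul_smul, mul_comm]

private lemma piKey' (cA : A →ₗ[k] k) :
    map ((TensorProduct.lid k B).toLinearMap ∘ₗ cA.rTensor B)
        ((TensorProduct.lid k B).toLinearMap ∘ₗ cA.rTensor B) ∘ₗ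
      (tensorTensorTensorComm k A A B B).toLinearMap
    = (TensorProduct.lid k (B ⊗[k] B)).toLinearMap ∘ₗ
        (mul' k k ∘ₗ map cA cA).rTensor (B ⊗[k] B) := by
  ext a₁ b₁ a₂ b₂
  simp [TensorProduct.smul_tmul', TensorProduct.tmul_smul, smul_smul, mul_comm]

lemma cproj₁_hom (dA : CoalgData k A) (dB : CoalgData k B) :
    IsCoalgHom (dA.prod dB) dA (cproj₁ dB) := by
  constructor
  · refine TensorProduct.ext' fun x y => ?_
    have e := LinearMap.congr_fun (piKey (A := A) dB.cu) (dA.dl x ⊗ₜ dB.dl y)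
    have e2 := LinearMap.congr_fun (cu_collapse dB) y
    simp only [CoalgData.prod, cproj₁, LinearMap.comp_apply, map_tmul, lTensor_tmul,
      rid_tmul, map_smul] at e e2 ⊢
    rw [e, e2]
    simp [TensorProduct.rid_tmul]
  · refine TensorProduct.ext' fun x y => ?_
    simp [CoalgData.prod, cproj₁, mul_comm]

lemma cproj₂_hom (dA : CoalgData k A) (dB : CoalgData k B) :
    IsCoalgHom (dA.prod dB) dB (cproj₂ dA) := by
  constructor
  · refine TensorProduct.ext' fun x y => ?_
    have e := LinearMap.congr_fun (piKey' (B := B) dA.cu) (dA.dl x ⊗ₜ dB.dl y)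
    have e2 := LinearMap.congr_fun (cu_collapse dA) x
    simp only [CoalgData.prod, cproj₂, LinearMap.comp_apply, map_tmul, rTensor_tmul,
      lid_tmul, map_smul] at e e2 ⊢
    rw [e, e2]
    simp [TensorProduct.lid_tmul]
  · refine TensorProduct.ext' fun x y => ?_
    simp [CoalgData.prod, cproj₂]

end

section step
variable {A B V W : Type*}
  [AddCommGroup A] [Module k A] [AddCommGroup B] [Module k B]
  [AddCommGroup V] [Module k V] [AddCommGroup W] [Module k W]

private lemma keyStepA (p : A →ₗ[k] k) (X : A →ₗ[k] V) (cB : B →ₗ[k] k) (θ : V ⊗[k] B →ₗ[k] W) :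
    (TensorProduct.lid k W).toLinearMap ∘ₗ
        map (mul' k k ∘ₗ map p cB) (θ ∘ₗ map X LinearMap.id) ∘ₗ
        (tensorTensorTensorComm k A A B B).toLinearMap
    = θ ∘ₗ map ((TensorProduct.lid k V).toLinearMap ∘ₗ map p X)
        ((TensorProduct.lid k B).toLinearMap ∘ₗ cB.rTensor B) := by
  ext a₁ b₁ a₂ b₂
  simp [TensorProduct.smul_tmul', TensorProduct.tmul_smul, smul_smul, mul_comm]
  rw [← TensorProduct.smul_tmul', map_smul]

private lemma keyStepB (q : A →ₗ[k] k) (X : A →ₗ[k] V) (cB : B →ₗ[k] k) (θ : V ⊗[k] B →ₗ[k] W) :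
    (TensorProduct.rid k W).toLinearMap ∘ₗ
        map (θ ∘ₗ map X LinearMap.id) (mul' k k ∘ₗ map q cB) ∘ₗ
        (tensorTensorTensorComm k A A B B).toLinearMap
    = θ ∘ₗ map ((TensorProduct.rid k V).toLinearMap ∘ₗ map X q)
        ((TensorProduct.rid k B).toLinearMap ∘ₗ cB.lTensor B) := by
  ext a₁ b₁ a₂ b₂
  simp [TensorProduct.smul_tmul', TensorProduct.tmul_smul, smul_smul, mul_comm]
  rw [← TensorProduct.smul_tmul', map_smul]

private lemma keyStepC (cA : A →ₗ[k] k) (p : B →ₗ[k] k) (X : B →ₗ[k] V) (θ : A ⊗[k] V →ₗ[k] W) :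
    (TensorProduct.lid k W).toLinearMap ∘ₗ
        map (mul' k k ∘ₗ map cA p) (θ ∘ₗ map LinearMap.id X) ∘ₗ
        (tensorTensorTensorComm k A A B B).toLinearMap
    = θ ∘ₗ map ((TensorProduct.lid k A).toLinearMap ∘ₗ cA.rTensor A)
        ((TensorProduct.lid k V).toLinearMap ∘ₗ map p X) := by
  ext a₁ b₁ a₂ b₂
  simp [TensorProduct.smul_tmul', TensorProduct.tmul_smul, smul_smul, mul_comm]
  rw [← TensorProduct.smul_tmul', map_smul]

private lemma keyStepD (cA : A →ₗ[k] k) (q : B →ₗ[k] k) (X : B →ₗ[k] V) (θ : A ⊗[k] V →ₗ[k] W) :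
    (TensorProduct.rid k W).toLinearMap ∘ₗ
        map (θ ∘ₗ map LinearMap.id X) (mul' k k ∘ₗ map cA q) ∘ₗ
        (tensorTensorTensorComm k A A B B).toLinearMap
    = θ ∘ₗ map ((TensorProduct.rid k A).toLinearMap ∘ₗ cA.lTensor A)
        ((TensorProduct.rid k V).toLinearMap ∘ₗ map X q) := by
  ext a₁ b₁ a₂ b₂
  simp [TensorProduct.smul_tmul', TensorProduct.tmul_smul, smul_smul, mul_comm]
  rw [← TensorProduct.smul_tmul', map_smul]

lemma stepA (dA : CoalgData k A) (dB : CoalgData k B) (p : A →ₗ[k] k) (X : A →ₗ[k] V)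
    (θ : V ⊗[k] B →ₗ[k] W) :
    θ ∘ₗ map (sL dA p X) LinearMap.id
      = sL (dA.prod dB) (mul' k k ∘ₗ map p dB.cu) (θ ∘ₗ map X LinearMap.id) := by
  refine TensorProduct.ext' fun x y => ?_
  have e := LinearMap.congr_fun (keyStepA p X dB.cu θ) (dA.dl x ⊗ₜ dB.dl y)
  have e2 := LinearMap.congr_fun dB.rCounit y
  simp only [sL, CoalgData.prod, LinearMap.comp_apply, map_tmul, LinearMap.id_coe, id_eq,
    mk_apply] at e e2 ⊢
  rw [e, e2]
  simp

lemma stepB (dA : CoalgData k A) (dB : CoalgData k B) (q : A →ₗ[k] k) (X : A →ₗ[k] V)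
    (θ : V ⊗[k] B →ₗ[k] W) :
    θ ∘ₗ map (sR dA X q) LinearMap.id
      = sR (dA.prod dB) (θ ∘ₗ map X LinearMap.id) (mul' k k ∘ₗ map q dB.cu) := by
  refine TensorProduct.ext' fun x y => ?_
  have e := LinearMap.congr_fun (keyStepB q X dB.cu θ) (dA.dl x ⊗ₜ dB.dl y)
  have e2 := LinearMap.congr_fun dB.lCounit y
  simp only [sR, CoalgData.prod, LinearMap.comp_apply, map_tmul, LinearMap.id_coe, id_eq,
    LinearMap.flip_apply, mk_apply] at e e2 ⊢
  rw [e, e2]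
  simp

lemma stepC (dA : CoalgData k A) (dB : CoalgData k B) (p : B →ₗ[k] k) (X : B →ₗ[k] V)
    (θ : A ⊗[k] V →ₗ[k] W) :
    θ ∘ₗ map LinearMap.id (sL dB p X)
      = sL (dA.prod dB) (mul' k k ∘ₗ map dA.cu p) (θ ∘ₗ map LinearMap.id X) := by
  refine TensorProduct.ext' fun x y => ?_
  have e := LinearMap.congr_fun (keyStepC dA.cu p X θ) (dA.dl x ⊗ₜ dB.dl y)
  have e2 := LinearMap.congr_fun dA.rCounit x
  simp only [sL, CoalgData.prod, LinearMap.comp_apply, map_tmul, LinearMap.id_coe, id_eq,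
    mk_apply] at e e2 ⊢
  rw [e, e2]
  simp

lemma stepD (dA : CoalgData k A) (dB : CoalgData k B) (q : B →ₗ[k] k) (X : B →ₗ[k] V)
    (θ : A ⊗[k] V →ₗ[k] W) :
    θ ∘ₗ map LinearMap.id (sR dB X q)
      = sR (dA.prod dB) (θ ∘ₗ map LinearMap.id X) (mul' k k ∘ₗ map dA.cu q) := by
  refine TensorProduct.ext' fun x y => ?_
  have e := LinearMap.congr_fun (keyStepD dA.cu q X θ) (dA.dl x ⊗ₜ dB.dl y)
  have e2 := LinearMap.congr_fun dA.lCounit x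
  simp only [sR, CoalgData.prod, LinearMap.comp_apply, map_tmul, LinearMap.id_coe, id_eq,
    LinearMap.flip_apply, mk_apply] at e e2 ⊢
  rw [e, e2]
  simp

end step

section conv
variable {C W : Type*} [AddCommGroup C] [Module k C] [Ring W] [Algebra k W]

/-- convolution product -/
def cv (d : CoalgData k C) (f g : C →ₗ[k] W) : C →ₗ[k] W :=
  mul' k W ∘ₗ map f g ∘ₗ d.dl

private lemma mulassoc_key {M N P : Type*} [AddCommGroup M] [Module k M]
    [AddCommGroup N] [Module k N] [AddCommGroup P] [Module k P]
    (f : M →ₗ[k] W) (g : N →ₗ[k] W) (h : P →ₗ[k] W) :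
    mul' k W ∘ₗ map (mul' k W ∘ₗ map f g) h
      = (mul' k W ∘ₗ map f (mul' k W ∘ₗ map g h)) ∘ₗ (TensorProduct.assoc k M N P).toLinearMap := by
  ext m n p
  simp [mul_assoc]

lemma cv_assoc (d : CoalgData k C) (f g h : C →ₗ[k] W) :
    cv d (cv d f g) h = cv d f (cv d g h) := by
  refine LinearMap.ext fun c => ?_
  simp only [cv, LinearMap.comp_apply]
  have e1 : (map (mul' k W ∘ₗ map f g ∘ₗ d.dl) h) (d.dl c)
      = (map (mul' k W ∘ₗ map f g) h) ((d.dl.rTensor C) (d.dl c)) :=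
    LinearMap.congr_fun
      (TensorProduct.ext' fun u v => rfl :
        map (mul' k W ∘ₗ map f g ∘ₗ d.dl) h
          = (map (mul' k W ∘ₗ map f g) h) ∘ₗ d.dl.rTensor C) (d.dl c)
  have e2 := LinearMap.congr_fun (mulassoc_key f g h) ((d.dl.rTensor C) (d.dl c))
  have e3 := LinearMap.congr_fun d.coassoc c
  have e4 : (map f (mul' k W ∘ₗ map g h ∘ₗ d.dl)) (d.dl c)
      = (map f (mul' k W ∘ₗ map g h)) ((d.dl.lTensor C) (d.dl c)) :=
    LinearMap.congr_fun
      (TensorProduct.ext' fun u v => rfl :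
        map f (mul' k W ∘ₗ map g h ∘ₗ d.dl)
          = (map f (mul' k W ∘ₗ map g h)) ∘ₗ d.dl.lTensor C) (d.dl c)
  simp only [LinearMap.comp_apply] at e1 e2 e3 e4
  rw [e1, e2, e3, e4]

lemma cv_comp_hom {A : Type*} [AddCommGroup A] [Module k A] {dA : CoalgData k A}
    {dC : CoalgData k C} {φ : A →ₗ[k] C} (hφ : IsCoalgHom dA dC φ) (f g : C →ₗ[k] W) :
    cv dC f g ∘ₗ φ = cv dA (f ∘ₗ φ) (g ∘ₗ φ) := by
  rw [cv, cv, map_comp]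
  simp only [LinearMap.comp_assoc, ← hφ.1]

private lemma uKeyL : mul' k W ∘ₗ map (Algebra.linearMap k W) LinearMap.id
    = (TensorProduct.lid k W).toLinearMap := by
  ext c w
  simp [Algebra.smul_def]

private lemma uKeyR : mul' k W ∘ₗ map LinearMap.id (Algebra.linearMap k W)
    = (TensorProduct.rid k W).toLinearMap := by
  ext w c
  simp [Algebra.smul_def, Algebra.commutes]

private lemma uKeyM : mul' k W ∘ₗ map (Algebra.linearMap k W) (Algebra.linearMap k W)
    = Algebra.linearMap k W ∘ₗ mul' k k := by
  ext c c'
  simp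

lemma sL_cv (d : CoalgData k C) (p : C →ₗ[k] k) (X : C →ₗ[k] W) :
    sL d p X = cv d (Algebra.linearMap k W ∘ₗ p) X := by
  rw [sL, cv]
  have : map (Algebra.linearMap k W ∘ₗ p) X
      = (map (Algebra.linearMap k W) LinearMap.id) ∘ₗ map p X := by
    rw [← map_comp]; simp
  rw [this]
  simp only [← LinearMap.comp_assoc]
  rw [uKeyL]

lemma sR_cv (d : CoalgData k C) (X : C →ₗ[k] W) (q : C →ₗ[k] k) :
    sR d X q = cv d X (Algebra.linearMap k W ∘ₗ q) := by
  rw [sR, cv]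
  have : map X (Algebra.linearMap k W ∘ₗ q)
      = (map LinearMap.id (Algebra.linearMap k W)) ∘ₗ map X q := by
    rw [← map_comp]; simp
  rw [this]
  simp only [← LinearMap.comp_assoc]
  rw [uKeyR]

lemma cv_unit_left (d : CoalgData k C) (f : C →ₗ[k] W) :
    cv d (Algebra.linearMap k W ∘ₗ d.cu) f = f := by
  rw [← sL_cv, sL_counit]

lemma cv_unit_right (d : CoalgData k C) (f : C →ₗ[k] W) :
    cv d f (Algebra.linearMap k W ∘ₗ d.cu) = f := by
  rw [← sR_cv, sR_counit]

lemma cv_lift (d : CoalgData k C) (f g : C →ₗ[k] k) :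
    Algebra.linearMap k W ∘ₗ cv d f g
      = cv d (Algebra.linearMap k W ∘ₗ f) (Algebra.linearMap k W ∘ₗ g) := by
  rw [cv, cv]
  have : map (Algebra.linearMap k W ∘ₗ f) (Algebra.linearMap k W ∘ₗ g)
      = map (Algebra.linearMap k W) (Algebra.linearMap k W) ∘ₗ map f g := (map_comp _ _ _ _)
  rw [this]
  simp only [← LinearMap.comp_assoc]
  rw [uKeyM]

end conv


section chi
variable {A B : Type*} [AddCommGroup A] [Module k A] [AddCommGroup B] [Module k B]

lemma chiProj₁ (dB : CoalgData k B) (χ : A →ₗ[k] k) :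
    mul' k k ∘ₗ map χ dB.cu = χ ∘ₗ cproj₁ dB := by
  refine TensorProduct.ext' fun x y => ?_
  simp [cproj₁, mul_comm]

lemma chiProj₂ (dA : CoalgData k A) (χ : B →ₗ[k] k) :
    mul' k k ∘ₗ map dA.cu χ = χ ∘ₗ cproj₂ dA := by
  refine TensorProduct.ext' fun x y => ?_
  simp [cproj₂]

end chi

section master
variable {C W : Type*} [AddCommGroup C] [Module k C] [Ring W] [Algebra k W]

lemma conv_master (d : CoalgData k C) (A S B T A' S' B' T' M : C →ₗ[k] W)
    (hAS : cv d A S = cv d B T)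
    (hA'A : cv d A' A = Algebra.linearMap k W ∘ₗ d.cu)
    (hS'S : cv d S' S = Algebra.linearMap k W ∘ₗ d.cu)
    (hTT' : cv d T T' = Algebra.linearMap k W ∘ₗ d.cu)
    (hBB' : cv d B B' = Algebra.linearMap k W ∘ₗ d.cu) :
    cv d A (cv d (cv d S (cv d M S')) A') = cv d B (cv d (cv d T (cv d M T')) B') := by
  have h1 : cv d (cv d S' A') (cv d A S) = Algebra.linearMap k W ∘ₗ d.cu := by
    rw [cv_assoc d S' A' (cv d A S), ← cv_assoc d A' A S, hA'A, cv_unit_left, hS'S]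
  have h2 : cv d (cv d A S) (cv d T' B') = Algebra.linearMap k W ∘ₗ d.cu := by
    rw [hAS, cv_assoc d B T (cv d T' B'), ← cv_assoc d T T' B', hTT', cv_unit_left, hBB']
  have key : cv d S' A' = cv d T' B' := by
    calc cv d S' A' = cv d (cv d S' A') (Algebra.linearMap k W ∘ₗ d.cu) :=
            (cv_unit_right d _).symm
      _ = cv d (cv d S' A') (cv d (cv d A S) (cv d T' B')) := by rw [h2]
      _ = cv d (cv d (cv d S' A') (cv d A S)) (cv d T' B') := by
            rw [cv_assoc d (cv d S' A') (cv d A S) (cv d T' B')]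
      _ = cv d (Algebra.linearMap k W ∘ₗ d.cu) (cv d T' B') := by rw [h1]
      _ = cv d T' B' := cv_unit_left d _
  rw [← cv_assoc d S M S', cv_assoc d (cv d S M) S' A', ← cv_assoc d A (cv d S M) (cv d S' A'),
    ← cv_assoc d A S M, ← cv_assoc d T M T', cv_assoc d (cv d T M) T' B',
    ← cv_assoc d B (cv d T M) (cv d T' B'), ← cv_assoc d B T M, hAS, key]

end master


section hopf
variable (k : Type*) [CommRing k] (H : Type*) [Ring H] [HopfAlgebra k H]

/-- the coalgebra data of `H` -/
def dH : CoalgData k H :=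
  ⟨Coalgebra.comul, Coalgebra.counit, Coalgebra.coassoc,
    Coalgebra.rTensor_counit_comp_comul, Coalgebra.lTensor_counit_comp_comul⟩

/-- the coalgebra data of `H ⊗ H` -/
def d2 : CoalgData k (H ⊗[k] H) := (dH k H).prod (dH k H)

/-- the coalgebra data of `(H ⊗ H) ⊗ H` -/
def d3 : CoalgData k ((H ⊗[k] H) ⊗[k] H) := (d2 k H).prod (dH k H)

lemma hom_id {C : Type*} [AddCommGroup C] [Module k C] (d : CoalgData k C) :
    IsCoalgHom d d LinearMap.id := by
  constructor
  · simp [map_id]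
  · simp

private lemma mulKey : ∀ w v : H ⊗[k] H,
    map (mul' k H) (mul' k H) ((tensorTensorTensorComm k H H H H) (w ⊗ₜ v)) = w * v := by
  intro w v
  induction w using TensorProduct.induction_on with
  | zero => simp
  | tmul x₁ y₁ =>
    induction v using TensorProduct.induction_on with
    | zero => simp
    | tmul x₂ y₂ => simp [Algebra.TensorProduct.tmul_mul_tmul]
    | add u v hu hv => simp only [tmul_add, map_add, hu, hv, mul_add]
  | add u v hu hv => simp only [add_tmul, map_add, hu, hv, add_mul]

lemma mul_hom : IsCoalgHom ((dH k H).prod (dH k H)) (dH k H) (mul' k H) := by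
  constructor
  · refine TensorProduct.ext' fun x y => ?_
    have e := mulKey k H (Coalgebra.comul x) (Coalgebra.comul y)
    simp only [dH, CoalgData.prod, LinearMap.comp_apply, map_tmul, mul'_apply] at e ⊢
    rw [Bialgebra.comul_mul]
    exact e.symm
  · refine TensorProduct.ext' fun x y => ?_
    simp [dH, CoalgData.prod]

private lemma oneKey : ∀ w : H ⊗[k] H,
    (tensorTensorTensorComm k H H H H) (w ⊗ₜ ((1 : H) ⊗ₜ[k] (1 : H)))
      = map ((TensorProduct.mk k H H).flip 1) ((TensorProduct.mk k H H).flip 1) w := by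
  intro w
  induction w using TensorProduct.induction_on with
  | zero => simp
  | tmul x y => simp
  | add u v hu hv => simp only [add_tmul, map_add, hu, hv]

private lemma oneKey' : ∀ w : H ⊗[k] H,
    (tensorTensorTensorComm k H H H H) (((1 : H) ⊗ₜ[k] (1 : H)) ⊗ₜ w)
      = map (TensorProduct.mk k H H 1) (TensorProduct.mk k H H 1) w := by
  intro w
  induction w using TensorProduct.induction_on with
  | zero => simp
  | tmul x y => simp
  | add u v hu hv => simp only [tmul_add, map_add, hu, hv]

lemma mkflip_hom : IsCoalgHom (dH k H) ((dH k H).prod (dH k H)) ((TensorProduct.mk k H H).flip 1) := by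
  constructor
  · refine LinearMap.ext fun x => ?_
    have e := oneKey k H (Coalgebra.comul x)
    simp only [d2, dH, CoalgData.prod, LinearMap.comp_apply, LinearMap.flip_apply, mk_apply,
      map_tmul] at e ⊢
    rw [Bialgebra.comul_one, Algebra.TensorProduct.one_def]
    exact e
  · refine LinearMap.ext fun x => ?_
    simp [d2, dH, CoalgData.prod]

lemma mk_hom : IsCoalgHom (dH k H) ((dH k H).prod (dH k H)) (TensorProduct.mk k H H 1) := by
  constructor
  · refine LinearMap.ext fun x => ?_
    have e := oneKey' k H (Coalgebra.comul x)
    simp only [d2, dH, CoalgData.prod, LinearMap.comp_apply, mk_apply, map_tmul] at e ⊢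
    rw [Bialgebra.comul_one, Algebra.TensorProduct.one_def]
    exact e
  · refine LinearMap.ext fun x => ?_
    simp [d2, dH, CoalgData.prod]

lemma mul_mkflip : mul' k H ∘ₗ (TensorProduct.mk k H H).flip 1 = LinearMap.id := by
  ext x
  simp

lemma mul_mk : mul' k H ∘ₗ TensorProduct.mk k H H 1 = LinearMap.id := by
  ext x
  simp

lemma M_eq : mul' k H ∘ₗ map LinearMap.id (mul' k H) ∘ₗ (TensorProduct.assoc k H H H).toLinearMap
    = mul' k H ∘ₗ map (mul' k H) LinearMap.id := by
  ext x y z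
  simp [mul_assoc]

lemma algk_id : Algebra.linearMap k k = LinearMap.id := by
  ext c
  simp

end hopf

end InfraNS

noncomputable section
open TensorProduct LinearMap
variable (k : Type*) [CommRing k] (H : Type*) [Ring H] [HopfAlgebra k H]



section tweq
variable (k : Type*) [CommRing k] (H : Type*) [Ring H] [HopfAlgebra k H]

lemma twistedMul_eq (σ σinv : H ⊗[k] H →ₗ[k] k) :
    twistedMul σ σinv = sL ((dH k H).prod (dH k H)) σ (sR ((dH k H).prod (dH k H)) (mul' k H) σinv) := by
  unfold twistedMul sL sR
  have hdl : ((dH k H).prod (dH k H)).dl = comul2 k H := rfl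
  rw [hdl]
  have e : map σ ((TensorProduct.rid k H).toLinearMap ∘ₗ map (mul' k H) σinv ∘ₗ comul2 k H)
      = map σ ((TensorProduct.rid k H).toLinearMap ∘ₗ map (mul' k H) σinv) ∘ₗ
          map LinearMap.id (comul2 k H) :=
    TensorProduct.ext' fun u v => rfl
  rw [e]
  simp only [LinearMap.comp_assoc]

end tweq

/-- Let `H` be a Hopf algebra over `k` and `σ : H ⊗ H → k` a 2-cocycle: convolution
invertible (with convolution inverse `σinv`), satisfying the cocycle identity
`σ(x₁,y₁)σ(x₂y₂,z) = σ(y₁,z₁)σ(x,y₂z₂)` and normalized so that `σ(x,1) = ε(x) = σ(1,x)`.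
Then the twisted multiplication `[x][y] = σ(x₁,y₁) σ⁻¹(x₃,y₃) [x₂y₂]` on the underlying
coalgebra of `H` is associative, with unit `[1]`. -/
theorem twistedMul_associative (σ σinv : H ⊗[k] H →ₗ[k] k)
    (hinv₁ : conv2 k H σ σinv = counit2 k H)
    (hinv₂ : conv2 k H σinv σ = counit2 k H)
    (hcocycle :
      conv3 k H (LinearMap.mul' k k ∘ₗ TensorProduct.map σ Coalgebra.counit)
        (σ ∘ₗ TensorProduct.map (LinearMap.mul' k H) LinearMap.id) =
      conv3 k H
        ((LinearMap.mul' k k ∘ₗ TensorProduct.map Coalgebra.counit σ) ∘ₗ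
          (TensorProduct.assoc k H H H).toLinearMap)
        ((σ ∘ₗ TensorProduct.map LinearMap.id (LinearMap.mul' k H)) ∘ₗ
          (TensorProduct.assoc k H H H).toLinearMap))
    (hone₁ : σ ∘ₗ (TensorProduct.mk k H H).flip 1 = Coalgebra.counit)
    (hone₂ : σ ∘ₗ TensorProduct.mk k H H 1 = Coalgebra.counit) :
    twistedMul σ σinv ∘ₗ TensorProduct.map (twistedMul σ σinv) LinearMap.id =
      twistedMul σ σinv ∘ₗ TensorProduct.map LinearMap.id (twistedMul σ σinv) ∘ₗ
        (TensorProduct.assoc k H H H).toLinearMap ∧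
    twistedMul σ σinv ∘ₗ (TensorProduct.mk k H H).flip 1 = LinearMap.id ∧
    twistedMul σ σinv ∘ₗ TensorProduct.mk k H H 1 = LinearMap.id := by
  constructor
  · -- associativity
    have hm1 : IsCoalgHom (((dH k H).prod (dH k H)).prod (dH k H)) ((dH k H).prod (dH k H)) (map (mul' k H) (LinearMap.id : H →ₗ[k] H)) :=
      prod_hom (mul_hom k H) (hom_id k (dH k H))
    have hm2 : IsCoalgHom (((dH k H).prod (dH k H)).prod (dH k H)) ((dH k H).prod (dH k H))
        (map (LinearMap.id : H →ₗ[k] H) (mul' k H) ∘ₗ (TensorProduct.assoc k H H H).toLinearMap) :=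
      (prod_hom (hom_id k (dH k H)) (mul_hom k H)).comp (assoc_hom (dH k H) (dH k H) (dH k H))
    have hπ : IsCoalgHom (((dH k H).prod (dH k H)).prod (dH k H)) ((dH k H).prod (dH k H)) (cproj₁ (dH k H)) := cproj₁_hom ((dH k H).prod (dH k H)) (dH k H)
    have hπ' : IsCoalgHom (((dH k H).prod (dH k H)).prod (dH k H)) ((dH k H).prod (dH k H))
        (cproj₂ (dH k H) ∘ₗ (TensorProduct.assoc k H H H).toLinearMap) :=
      (cproj₂_hom (dH k H) ((dH k H).prod (dH k H))).comp (assoc_hom (dH k H) (dH k H) (dH k H))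
    -- inverse facts at the scalar level
    have hinv₁' : cv ((dH k H).prod (dH k H)) σ σinv = ((dH k H).prod (dH k H)).cu := hinv₁
    have hinv₂' : cv ((dH k H).prod (dH k H)) σinv σ = ((dH k H).prod (dH k H)).cu := hinv₂
    have inva : cv (((dH k H).prod (dH k H)).prod (dH k H)) (mul' k k ∘ₗ map σinv (dH k H).cu) (mul' k k ∘ₗ map σ (dH k H).cu) = (((dH k H).prod (dH k H)).prod (dH k H)).cu := by
      have e1 : (mul' k k ∘ₗ map σinv (dH k H).cu) = σinv ∘ₗ cproj₁ (dH k H) := chiProj₁ (dH k H) σinv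
      have e2 : (mul' k k ∘ₗ map σ (dH k H).cu) = σ ∘ₗ cproj₁ (dH k H) := chiProj₁ (dH k H) σ
      rw [e1, e2, ← cv_comp_hom hπ σinv σ, hinv₂']
      exact hπ.2
    have invs : cv (((dH k H).prod (dH k H)).prod (dH k H)) (σinv ∘ₗ map (mul' k H) LinearMap.id) (σ ∘ₗ map (mul' k H) LinearMap.id) = (((dH k H).prod (dH k H)).prod (dH k H)).cu := by
      rw [← cv_comp_hom hm1 σinv σ, hinv₂']
      exact hm1.2
    have invt : cv (((dH k H).prod (dH k H)).prod (dH k H)) (σ ∘ₗ (map LinearMap.id (mul' k H) ∘ₗ (TensorProduct.assoc k H H H).toLinearMap)) (σinv ∘ₗ (map LinearMap.id (mul' k H) ∘ₗ (TensorProduct.assoc k H H H).toLinearMap)) = (((dH k H).prod (dH k H)).prod (dH k H)).cu := by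
      rw [← cv_comp_hom hm2 σ σinv, hinv₁']
      exact hm2.2
    have invb : cv (((dH k H).prod (dH k H)).prod (dH k H)) ((mul' k k ∘ₗ map (dH k H).cu σ) ∘ₗ (TensorProduct.assoc k H H H).toLinearMap) ((mul' k k ∘ₗ map (dH k H).cu σinv) ∘ₗ (TensorProduct.assoc k H H H).toLinearMap) = (((dH k H).prod (dH k H)).prod (dH k H)).cu := by
      have e1 : ((mul' k k ∘ₗ map (dH k H).cu σ) ∘ₗ (TensorProduct.assoc k H H H).toLinearMap) = σ ∘ₗ (cproj₂ (dH k H) ∘ₗ (TensorProduct.assoc k H H H).toLinearMap) := by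
        have e : mul' k k ∘ₗ map (dH k H).cu σ = σ ∘ₗ cproj₂ (dH k H) := chiProj₂ (dH k H) σ
        rw [e, LinearMap.comp_assoc]
      have e2 : ((mul' k k ∘ₗ map (dH k H).cu σinv) ∘ₗ (TensorProduct.assoc k H H H).toLinearMap) = σinv ∘ₗ (cproj₂ (dH k H) ∘ₗ (TensorProduct.assoc k H H H).toLinearMap) := by
        have e : mul' k k ∘ₗ map (dH k H).cu σinv = σinv ∘ₗ cproj₂ (dH k H) := chiProj₂ (dH k H) σinv
        rw [e, LinearMap.comp_assoc]
      rw [e1, e2, ← cv_comp_hom hπ' σ σinv, hinv₁']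
      exact hπ'.2
    have h9 : cv (((dH k H).prod (dH k H)).prod (dH k H)) (mul' k k ∘ₗ map σ (dH k H).cu) (σ ∘ₗ map (mul' k H) LinearMap.id) = cv (((dH k H).prod (dH k H)).prod (dH k H)) ((mul' k k ∘ₗ map (dH k H).cu σ) ∘ₗ (TensorProduct.assoc k H H H).toLinearMap) (σ ∘ₗ (map LinearMap.id (mul' k H) ∘ₗ (TensorProduct.assoc k H H H).toLinearMap)) := hcocycle
    -- expansion of the two sides
    have expL : twistedMul σ σinv ∘ₗ map (twistedMul σ σinv) LinearMap.id
        = sL (((dH k H).prod (dH k H)).prod (dH k H)) (mul' k k ∘ₗ map σ (dH k H).cu) (sR (((dH k H).prod (dH k H)).prod (dH k H)) (sL (((dH k H).prod (dH k H)).prod (dH k H)) (σ ∘ₗ map (mul' k H) LinearMap.id) (sR (((dH k H).prod (dH k H)).prod (dH k H)) (mul' k H ∘ₗ map (mul' k H) LinearMap.id) (σinv ∘ₗ map (mul' k H) LinearMap.id))) (mul' k k ∘ₗ map σinv (dH k H).cu)) := by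
      rw [twistedMul_eq k H σ σinv]
      rw [stepA ((dH k H).prod (dH k H)) (dH k H) σ (sR ((dH k H).prod (dH k H)) (mul' k H) σinv) (sL ((dH k H).prod (dH k H)) σ (sR ((dH k H).prod (dH k H)) (mul' k H) σinv))]
      rw [stepB ((dH k H).prod (dH k H)) (dH k H) σinv (mul' k H) (sL ((dH k H).prod (dH k H)) σ (sR ((dH k H).prod (dH k H)) (mul' k H) σinv))]
      rw [sL_comp_hom hm1 σ (sR ((dH k H).prod (dH k H)) (mul' k H) σinv)]
      rw [sR_comp_hom hm1 (mul' k H) σinv]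
    have expR : twistedMul σ σinv ∘ₗ map LinearMap.id (twistedMul σ σinv) ∘ₗ
          (TensorProduct.assoc k H H H).toLinearMap
        = sL (((dH k H).prod (dH k H)).prod (dH k H)) ((mul' k k ∘ₗ map (dH k H).cu σ) ∘ₗ (TensorProduct.assoc k H H H).toLinearMap) (sR (((dH k H).prod (dH k H)).prod (dH k H)) (sL (((dH k H).prod (dH k H)).prod (dH k H)) (σ ∘ₗ (map LinearMap.id (mul' k H) ∘ₗ (TensorProduct.assoc k H H H).toLinearMap)) (sR (((dH k H).prod (dH k H)).prod (dH k H)) (mul' k H ∘ₗ map (mul' k H) LinearMap.id) (σinv ∘ₗ (map LinearMap.id (mul' k H) ∘ₗ (TensorProduct.assoc k H H H).toLinearMap)))) ((mul' k k ∘ₗ map (dH k H).cu σinv) ∘ₗ (TensorProduct.assoc k H H H).toLinearMap)) := by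
      rw [twistedMul_eq k H σ σinv, ← LinearMap.comp_assoc]
      rw [stepC (dH k H) ((dH k H).prod (dH k H)) σ (sR ((dH k H).prod (dH k H)) (mul' k H) σinv) (sL ((dH k H).prod (dH k H)) σ (sR ((dH k H).prod (dH k H)) (mul' k H) σinv))]
      rw [stepD (dH k H) ((dH k H).prod (dH k H)) σinv (mul' k H) (sL ((dH k H).prod (dH k H)) σ (sR ((dH k H).prod (dH k H)) (mul' k H) σinv))]
      rw [sL_comp_hom (assoc_hom (dH k H) (dH k H) (dH k H))]
      rw [sR_comp_hom (assoc_hom (dH k H) (dH k H) (dH k H))]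
      have hre : (sL ((dH k H).prod (dH k H)) σ (sR ((dH k H).prod (dH k H)) (mul' k H) σinv) ∘ₗ map LinearMap.id (mul' k H)) ∘ₗ
            (TensorProduct.assoc k H H H).toLinearMap
          = sL ((dH k H).prod (dH k H)) σ (sR ((dH k H).prod (dH k H)) (mul' k H) σinv) ∘ₗ
              (map LinearMap.id (mul' k H) ∘ₗ (TensorProduct.assoc k H H H).toLinearMap) := rfl
      rw [hre, sL_comp_hom hm2, sR_comp_hom hm2]
      have hM : mul' k H ∘ₗ (map LinearMap.id (mul' k H) ∘ₗ
          (TensorProduct.assoc k H H H).toLinearMap) = (mul' k H ∘ₗ map (mul' k H) LinearMap.id) := M_eq k H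
      rw [hM]
    rw [expL, expR]
    rw [sL_cv, sL_cv, sL_cv, sL_cv, sR_cv, sR_cv, sR_cv, sR_cv]
    refine conv_master (((dH k H).prod (dH k H)).prod (dH k H)) _ _ _ _ _ _ _ _ (mul' k H ∘ₗ map (mul' k H) LinearMap.id) ?_ ?_ ?_ ?_ ?_
    · rw [← cv_lift, ← cv_lift, h9]
    · rw [← cv_lift, inva]
    · rw [← cv_lift, invs]
    · rw [← cv_lift, invt]
    · rw [← cv_lift, invb]
  constructor
  · -- right unit
    have hχ : σinv ∘ₗ (TensorProduct.mk k H H).flip 1 = Coalgebra.counit := by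
      have h : cv ((dH k H).prod (dH k H)) σinv σ ∘ₗ (TensorProduct.mk k H H).flip 1
          = cv (dH k H) (σinv ∘ₗ (TensorProduct.mk k H H).flip 1)
              (σ ∘ₗ (TensorProduct.mk k H H).flip 1) :=
        cv_comp_hom (mkflip_hom k H) σinv σ
      rw [hone₁] at h
      have h2 : cv ((dH k H).prod (dH k H)) σinv σ ∘ₗ (TensorProduct.mk k H H).flip 1 = Coalgebra.counit := by
        have e : cv ((dH k H).prod (dH k H)) σinv σ = ((dH k H).prod (dH k H)).cu := hinv₂
        rw [e]
        exact (mkflip_hom k H).2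
      rw [h2] at h
      have h3 : cv (dH k H) (σinv ∘ₗ (TensorProduct.mk k H H).flip 1) Coalgebra.counit
          = σinv ∘ₗ (TensorProduct.mk k H H).flip 1 := by
        have h4 := cv_unit_right (dH k H) (σinv ∘ₗ (TensorProduct.mk k H H).flip 1)
        rwa [algk_id, LinearMap.id_comp] at h4
      rw [h3] at h
      exact h.symm
    rw [twistedMul_eq k H σ σinv, sL_comp_hom (mkflip_hom k H), sR_comp_hom (mkflip_hom k H),
      hone₁, hχ, mul_mkflip]
    have e1 : sR (dH k H) LinearMap.id Coalgebra.counit = LinearMap.id := sR_counit _ _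
    have e2 : sL (dH k H) Coalgebra.counit LinearMap.id = LinearMap.id := sL_counit _ _
    rw [e1, e2]
  · -- left unit
    have hχ : σinv ∘ₗ TensorProduct.mk k H H 1 = Coalgebra.counit := by
      have h : cv ((dH k H).prod (dH k H)) σ σinv ∘ₗ TensorProduct.mk k H H 1
          = cv (dH k H) (σ ∘ₗ TensorProduct.mk k H H 1) (σinv ∘ₗ TensorProduct.mk k H H 1) :=
        cv_comp_hom (mk_hom k H) σ σinv
      rw [hone₂] at h
      have h2 : cv ((dH k H).prod (dH k H)) σ σinv ∘ₗ TensorProduct.mk k H H 1 = Coalgebra.counit := by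
        have e : cv ((dH k H).prod (dH k H)) σ σinv = ((dH k H).prod (dH k H)).cu := hinv₁
        rw [e]
        exact (mk_hom k H).2
      rw [h2] at h
      have h3 : cv (dH k H) Coalgebra.counit (σinv ∘ₗ TensorProduct.mk k H H 1)
          = σinv ∘ₗ TensorProduct.mk k H H 1 := by
        have h4 := cv_unit_left (dH k H) (σinv ∘ₗ TensorProduct.mk k H H 1)
        rwa [algk_id, LinearMap.id_comp] at h4
      rw [h3] at h
      exact h.symm
    rw [twistedMul_eq k H σ σinv, sL_comp_hom (mk_hom k H), sR_comp_hom (mk_hom k H),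
      hone₂, hχ, mul_mk]
    have e1 : sR (dH k H) LinearMap.id Coalgebra.counit = LinearMap.id := sR_counit _ _
    have e2 : sL (dH k H) Coalgebra.counit LinearMap.id = LinearMap.id := sL_counit _ _
    rw [e1, e2]


end
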